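/- Convolution formula for the M-transform: if Φ(s,τ) = M_{ρ,m}[φ](s,τ) and Ψ(s,τ) = M_{ρ,m}[ψ](s,τ), then τ Φ(s,τ) Ψ(s,τ) = N[φ̃ ∗ ψ̃](s,τ), where φ̃(t) = φ(t)/((t^m/τ^m)+τ^m)^ρ and ψ̃(t) = ψ(t)/((t^m/τ^m)+τ^m)^ρ, and ∗ is the Laplace convolution. -/

import Mathlib

open MeasureTheory Set intervalIntegral

lemma Mtr_aux_integrable (ρ : ℂ) (hρ : 0 ≤ ρ.re) (m : ℕ) (φ : ℝ → ℂ)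
    (hφ : Continuous φ) (K γ : ℝ) (hK : 0 < K) (hγ : 0 < γ)
    (hexp : ∀ t ≥ (0:ℝ), ‖φ t‖ ≤ K * Real.exp (t / γ))
    (s τ : ℝ) (hτ : 0 < τ) (hsγ : 1 / γ < s / τ) :
    IntegrableOn (fun t : ℝ => (Real.exp (-(s * t)) : ℂ) * φ (τ * t) /
      (((t ^ m + τ ^ m : ℝ) : ℂ) ^ ρ)) (Ioi 0) := by
  have hτm : (0:ℝ) < τ ^ m := pow_pos hτ m
  have hb : 0 < s - τ / γ := by
    have h1 : 1 / γ * τ < s / τ * τ := mul_lt_mul_of_pos_right hsγ hτ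
    rw [div_mul_cancel₀ _ hτ.ne'] at h1
    have : τ / γ < s := by rw [div_eq_mul_inv, mul_comm]; rw [div_eq_inv_mul] at h1; linarith
    linarith
  have hpos : ∀ t ∈ Ioi (0:ℝ), (0:ℝ) < t ^ m + τ ^ m := fun t ht =>
    add_pos_of_nonneg_of_pos (pow_nonneg (le_of_lt ht) m) hτm
  have hcontD : ContinuousOn (fun t : ℝ => (((t ^ m + τ ^ m : ℝ) : ℂ) ^ ρ)) (Ioi 0) := by
    apply ContinuousOn.cpow
    · exact (Complex.continuous_ofReal.comp (by continuity)).continuousOn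
    · exact continuousOn_const
    · intro a ha
      rw [Complex.mem_slitPlane_iff]
      left
      rw [Complex.ofReal_re]
      exact hpos a ha
  have hne : ∀ a ∈ Ioi (0:ℝ), (((a ^ m + τ ^ m : ℝ) : ℂ) ^ ρ) ≠ 0 := by
    intro a ha h
    rw [Complex.cpow_eq_zero_iff] at h
    exact (Complex.ofReal_ne_zero.mpr (hpos a ha).ne') h.1
  have hcont : ContinuousOn (fun t : ℝ => (Real.exp (-(s * t)) : ℂ) * φ (τ * t) /
      (((t ^ m + τ ^ m : ℝ) : ℂ) ^ ρ)) (Ioi 0) := by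
    apply ContinuousOn.div _ hcontD hne
    exact ((Complex.continuous_ofReal.comp (by continuity)).mul (hφ.comp (by continuity))).continuousOn
  refine Integrable.mono' (g := fun t => (K / (τ ^ m) ^ ρ.re) * Real.exp (-(s - τ / γ) * t))
    ((exp_neg_integrableOn_Ioi 0 hb).const_mul _)
    (hcont.aestronglyMeasurable measurableSet_Ioi) ?_
  filter_upwards [ae_restrict_mem measurableSet_Ioi] with t ht
  have ht0 : (0:ℝ) < t := ht
  have hDp : (0:ℝ) < t ^ m + τ ^ m := hpos t ht
  have hnorm : ‖(Real.exp (-(s * t)) : ℂ) * φ (τ * t) / (((t ^ m + τ ^ m : ℝ) : ℂ) ^ ρ)‖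
      = Real.exp (-(s * t)) * ‖φ (τ * t)‖ / (t ^ m + τ ^ m) ^ ρ.re := by
    rw [norm_div, norm_mul]
    rw [Complex.norm_cpow_eq_rpow_re_of_pos hDp]
    simp [Complex.norm_real, abs_of_pos (Real.exp_pos _), Complex.norm_exp]
  rw [hnorm]
  have hden : (τ ^ m : ℝ) ^ ρ.re ≤ (t ^ m + τ ^ m) ^ ρ.re :=
    Real.rpow_le_rpow hτm.le (le_add_of_nonneg_left (pow_nonneg ht0.le m)) hρ
  have hdenpos : (0:ℝ) < (τ ^ m : ℝ) ^ ρ.re := Real.rpow_pos_of_pos hτm _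
  have hnum : Real.exp (-(s * t)) * ‖φ (τ * t)‖
      ≤ Real.exp (-(s * t)) * (K * Real.exp ((τ * t) / γ)) :=
    mul_le_mul_of_nonneg_left (hexp (τ * t) (by positivity)) (Real.exp_pos _).le
  calc Real.exp (-(s * t)) * ‖φ (τ * t)‖ / (t ^ m + τ ^ m) ^ ρ.re
      ≤ Real.exp (-(s * t)) * (K * Real.exp ((τ * t) / γ)) / (τ ^ m) ^ ρ.re := by
        apply div_le_div₀ (by positivity) hnum hdenpos hden
    _ = (K / (τ ^ m) ^ ρ.re) * Real.exp (-(s - τ / γ) * t) := by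
        rw [show Real.exp (-(s * t)) * (K * Real.exp ((τ * t) / γ))
            = K * (Real.exp (-(s * t)) * Real.exp ((τ * t) / γ)) by ring,
          ← Real.exp_add, show -(s * t) + (τ * t) / γ = -(s - τ / γ) * t by ring]
        ring

theorem Mtransform_convolution
    (ρ : ℂ) (hρ : 0 ≤ ρ.re) (m : ℕ) (hm : 0 < m) (φ ψ : ℝ → ℂ)
    (hφ : Continuous φ) (hψ : Continuous ψ)
    (K γ : ℝ) (hK : 0 < K) (hγ : 0 < γ)
    (hexpφ : ∀ t ≥ (0:ℝ), ‖φ t‖ ≤ K * Real.exp (t / γ))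
    (hexpψ : ∀ t ≥ (0:ℝ), ‖ψ t‖ ≤ K * Real.exp (t / γ))
    (s τ : ℝ) (hs : 0 < s) (hτ : 0 < τ) (hsγ : 1 / γ < s / τ) :
    (τ : ℂ) *
        (∫ t in Ioi (0:ℝ), (Real.exp (-(s * t)) : ℂ) * φ (τ * t) /
          (((t ^ m + τ ^ m : ℝ) : ℂ) ^ ρ)) *
        (∫ t in Ioi (0:ℝ), (Real.exp (-(s * t)) : ℂ) * ψ (τ * t) /
          (((t ^ m + τ ^ m : ℝ) : ℂ) ^ ρ))
      = ∫ t in Ioi (0:ℝ), (Real.exp (-(s * t)) : ℂ) *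
          (∫ x in (0:ℝ)..(τ * t),
            (φ (τ * t - x) /
              ((((τ * t - x) ^ m / τ ^ m + τ ^ m : ℝ) : ℂ) ^ ρ)) *
            (ψ x / (((x ^ m / τ ^ m + τ ^ m : ℝ) : ℂ) ^ ρ))) := by
  set f : ℝ → ℂ := fun t => (Real.exp (-(s * t)) : ℂ) * φ (τ * t) /
      (((t ^ m + τ ^ m : ℝ) : ℂ) ^ ρ) with hf_def
  set g : ℝ → ℂ := fun t => (Real.exp (-(s * t)) : ℂ) * ψ (τ * t) /
      (((t ^ m + τ ^ m : ℝ) : ℂ) ^ ρ) with hg_def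
  have hfint : IntegrableOn f (Ioi 0) :=
    Mtr_aux_integrable ρ hρ m φ hφ K γ hK hγ hexpφ s τ hτ hsγ
  have hgint : IntegrableOn g (Ioi 0) :=
    Mtr_aux_integrable ρ hρ m ψ hψ K γ hK hγ hexpψ s τ hτ hsγ
  have hconv := integral_posConvolution hfint hgint (ContinuousLinearMap.mul ℝ ℂ)
  simp only [ContinuousLinearMap.mul_apply'] at hconv
  have hτm : (τ:ℝ) ^ m ≠ 0 := (pow_pos hτ m).ne'
  -- pointwise identity for x in Ioi 0
  have hpt : ∀ x ∈ Ioi (0:ℝ),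
      (Real.exp (-(s * x)) : ℂ) *
        (∫ u in (0:ℝ)..(τ * x),
          (φ (τ * x - u) / ((((τ * x - u) ^ m / τ ^ m + τ ^ m : ℝ) : ℂ) ^ ρ)) *
          (ψ u / (((u ^ m / τ ^ m + τ ^ m : ℝ) : ℂ) ^ ρ)))
      = (τ : ℂ) * ∫ t in (0:ℝ)..x, f t * g (x - t) := by
    intro x _
    set P : ℝ → ℂ := fun u =>
      (φ (τ * x - u) / ((((τ * x - u) ^ m / τ ^ m + τ ^ m : ℝ) : ℂ) ^ ρ)) *
      (ψ u / (((u ^ m / τ ^ m + τ ^ m : ℝ) : ℂ) ^ ρ)) with hP_def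
    have h1 : (∫ u in (0:ℝ)..(τ * x), P u) = τ • ∫ v in (0:ℝ)..x, P (τ * v) := by
      have h1' := intervalIntegral.smul_integral_comp_mul_left (a := (0:ℝ)) (b := x) P τ
      rw [mul_zero] at h1'
      exact h1'.symm
    have h2 : (∫ v in (0:ℝ)..x, P (τ * v)) = ∫ t in (0:ℝ)..x, P (τ * (x - t)) := by
      rw [intervalIntegral.integral_comp_sub_left (fun v => P (τ * v)) x]
      norm_num
    have h3 : ∀ t : ℝ, f t * g (x - t) = (Real.exp (-(s * x)) : ℂ) * P (τ * (x - t)) := by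
      intro t
      rw [hf_def, hg_def, hP_def]
      simp only
      have e1 : τ * x - τ * (x - t) = τ * t := by ring
      have e2 : (τ * (x - t)) ^ m / τ ^ m = (x - t) ^ m := by
        rw [mul_pow, mul_comm, mul_div_assoc, div_self hτm, mul_one]
      have e3 : (τ * t) ^ m / τ ^ m = t ^ m := by
        rw [mul_pow, mul_comm, mul_div_assoc, div_self hτm, mul_one]
      rw [e1, e3, e2]
      have e4 : (Real.exp (-(s * t)) : ℂ) * (Real.exp (-(s * (x - t))) : ℂ)
          = (Real.exp (-(s * x)) : ℂ) := by
        rw [← Complex.ofReal_mul, ← Real.exp_add]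
        norm_num
        ring_nf
      rw [← e4]
      ring
    rw [h1, h2]
    rw [intervalIntegral.integral_congr (g := fun t => (Real.exp (-(s * x)) : ℂ) * P (τ * (x - t)))
      (fun t _ => h3 t)]
    rw [intervalIntegral.integral_const_mul]
    rw [Complex.real_smul]
    ring
  calc (τ : ℂ) * (∫ t in Ioi (0:ℝ), f t) * (∫ t in Ioi (0:ℝ), g t)
      = (τ : ℂ) * ∫ x in Ioi (0:ℝ), ∫ t in (0:ℝ)..x, f t * g (x - t) := by
        rw [hconv]; ring
    _ = ∫ x in Ioi (0:ℝ), (τ : ℂ) * ∫ t in (0:ℝ)..x, f t * g (x - t) := by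
        rw [MeasureTheory.integral_const_mul]
    _ = _ := by
        refine (setIntegral_congr_fun measurableSet_Ioi ?_).symm
        intro x hx
        exact hpt x hx
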